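/- Let H be a finite-dimensional complex inner product space and let R : ℂ^j → H, S : ℂ^k → H, T : ℂ^ℓ → H be linear maps. Writing G(A) := det(A* A) for the Gram determinant of a linear map A into H, one has G([R,S,T]) · G(R) ≤ G([R,S]) · G([R,T]), where [·,·] denotes the combined map on the direct sum of the domains. -/

import Mathlib

open scoped ComplexOrder

/-- The combined map on the direct sum of the domains. -/
noncomputable def combinedMap {ι κ H : Type*}
    [NormedAddCommGroup H] [InnerProductSpace ℂ H]
    (S : EuclideanSpace ℂ ι →ₗ[ℂ] H) (T : EuclideanSpace ℂ κ →ₗ[ℂ] H) :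
    EuclideanSpace ℂ (ι ⊕ κ) →ₗ[ℂ] H :=
  S ∘ₗ (WithLp.linearEquiv 2 ℂ (ι → ℂ)).symm.toLinearMap ∘ₗ LinearMap.funLeft ℂ ℂ Sum.inl ∘ₗ
      (WithLp.linearEquiv 2 ℂ (ι ⊕ κ → ℂ)).toLinearMap +
    T ∘ₗ (WithLp.linearEquiv 2 ℂ (κ → ℂ)).symm.toLinearMap ∘ₗ LinearMap.funLeft ℂ ℂ Sum.inr ∘ₗ
      (WithLp.linearEquiv 2 ℂ (ι ⊕ κ → ℂ)).toLinearMap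

/-- The Gram determinant `G(A) = det (A* A)` of a linear map into `H`. -/
noncomputable def gramDet {ι H : Type*} [Fintype ι]
    [NormedAddCommGroup H] [InnerProductSpace ℂ H] [FiniteDimensional ℂ H]
    (A : EuclideanSpace ℂ ι →ₗ[ℂ] H) : ℂ :=
  LinearMap.det (LinearMap.adjoint A ∘ₗ A)

open Matrix

namespace KotAux

variable {m : Type*} [Fintype m] [DecidableEq m]

lemma det_nonneg {M : Matrix m m ℂ} (hM : M.PosSemidef) : 0 ≤ M.det := by
  rw [hM.isHermitian.det_eq_prod_eigenvalues]
  exact Finset.prod_nonneg fun i _ => Complex.zero_le_real.mpr (hM.eigenvalues_nonneg i)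

lemma det_le_one {S : Matrix m m ℂ} (hS : S.PosSemidef)
    (h1S : ((1 : Matrix m m ℂ) - S).PosSemidef) : S.det ≤ 1 := by
  have hH := hS.isHermitian
  have key : ∀ i, (hH.eigenvalues i : ℂ) ≤ 1 := by
    intro i
    set v : EuclideanSpace ℂ m := hH.eigenvectorBasis i with hv
    have hvv : star (WithLp.ofLp v) ⬝ᵥ (WithLp.ofLp v) = 1 := by
      rw [dotProduct_comm, ← EuclideanSpace.inner_eq_star_dotProduct]
      rw [inner_self_eq_norm_sq_to_K, hH.eigenvectorBasis.orthonormal.1 i]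
      norm_num
    have hev := hH.mulVec_eigenvectorBasis i
    have h0 := h1S.dotProduct_mulVec_nonneg (WithLp.ofLp v)
    rw [sub_mulVec, one_mulVec, dotProduct_sub, hev] at h0
    rw [hvv, dotProduct_smul, hvv, Complex.real_smul, mul_one] at h0
    exact sub_nonneg.mp h0
  rw [hH.det_eq_prod_eigenvalues]
  exact Finset.prod_le_one
    (fun i _ => Complex.zero_le_real.mpr (hS.eigenvalues_nonneg i)) (fun i _ => key i)

open scoped MatrixOrder in
lemma det_le_det {S D : Matrix m m ℂ} (hS : S.PosSemidef)
    (hSD : (D - S).PosSemidef) : S.det ≤ D.det := by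
  have hD : D.PosSemidef := by
    have := hSD.add hS
    simpa using this
  by_cases hdet : D.det = 0
  · obtain ⟨x, hx, hDx⟩ := Matrix.exists_mulVec_eq_zero_iff.mpr hdet
    have h2 : star x ⬝ᵥ (D - S) *ᵥ x = - (star x ⬝ᵥ S *ᵥ x) := by
      rw [sub_mulVec, dotProduct_sub, hDx]; simp
    have h3 := hSD.dotProduct_mulVec_nonneg x
    have h4 := hS.dotProduct_mulVec_nonneg x
    rw [h2] at h3
    have h1 : star x ⬝ᵥ S *ᵥ x = 0 := le_antisymm (neg_nonneg.mp h3) h4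
    have hSx : S *ᵥ x = 0 := (hS.dotProduct_mulVec_zero_iff x).mp h1
    have : S.det = 0 := Matrix.exists_mulVec_eq_zero_iff.mp ⟨x, hx, hSx⟩
    rw [this, hdet]
  · -- D is invertible; use its square root
    set C := CFC.sqrt D with hC
    have hCsq : C * C = D := CFC.sqrt_mul_sqrt_self D hD.nonneg
    have hCh : C.IsHermitian := (CFC.sqrt_nonneg D).posSemidef.isHermitian
    have hCdet : C.det ≠ 0 := fun h => hdet (by rw [← hCsq, det_mul, h, mul_zero])
    have hCunit : IsUnit C := (Matrix.isUnit_iff_isUnit_det _).mpr hCdet.isUnit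
    have hCE : C * C⁻¹ = 1 := Matrix.mul_nonsing_inv _ hCdet.isUnit
    have hEC : C⁻¹ * C = 1 := Matrix.nonsing_inv_mul _ hCdet.isUnit
    have hEh : (C⁻¹)ᴴ = C⁻¹ := by rw [Matrix.conjTranspose_nonsing_inv, hCh.eq]
    set S' := (C⁻¹)ᴴ * S * C⁻¹ with hS'
    have hS'psd : S'.PosSemidef := hS.conjTranspose_mul_mul_same _
    have hDinv : (C⁻¹)ᴴ * D * C⁻¹ = 1 := by
      rw [hEh, ← hCsq, ← Matrix.mul_assoc, Matrix.mul_assoc (C⁻¹ * C), hEC, hCE,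
        Matrix.one_mul]
    have h1S' : ((1 : Matrix m m ℂ) - S').PosSemidef := by
      have h := hSD.conjTranspose_mul_mul_same (C⁻¹)
      have e : C⁻¹ᴴ * (D - S) * C⁻¹ = 1 - S' := by
        rw [Matrix.mul_sub, Matrix.sub_mul, hDinv, hS']
      rwa [e] at h
    have hdetS' : S'.det ≤ 1 := det_le_one hS'psd h1S'
    have hfact : S = C * S' * C := by
      rw [hS', hEh, ← Matrix.mul_assoc, ← Matrix.mul_assoc, hCE, Matrix.one_mul,
        Matrix.mul_assoc, hEC, Matrix.mul_one]
    have e1 : S.det = C.det * S'.det * C.det := by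
      conv_lhs => rw [hfact]
      conv_lhs => rw [Matrix.det_mul, Matrix.det_mul]
    have e2 : D.det = C.det * C.det := by
      conv_lhs => rw [← hCsq, Matrix.det_mul]
    have hDd : 0 ≤ C.det * C.det := e2 ▸ det_nonneg hD
    rw [e1, e2]
    calc C.det * S'.det * C.det = S'.det * (C.det * C.det) := by ring
    _ ≤ 1 * (C.det * C.det) := mul_le_mul_of_nonneg_right hdetS' hDd
    _ = C.det * C.det := one_mul _

end KotAux

namespace KotAux

variable {m n a b c : Type*} [Fintype m] [DecidableEq m]
  [Fintype n] [Fintype a] [Fintype b] [Fintype c]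

lemma posDef_of_det_ne_zero {A : Matrix m m ℂ} (hA : A.PosSemidef) (h : A.det ≠ 0) :
    A.PosDef := by
  refine PosDef.of_dotProduct_mulVec_pos hA.isHermitian fun x hx => ?_
  rcases (hA.dotProduct_mulVec_nonneg x).lt_or_eq with hlt | heq
  · exact hlt
  · exact absurd (Matrix.exists_mulVec_eq_zero_iff.mp
      ⟨x, hx, (hA.dotProduct_mulVec_zero_iff x).mp heq.symm⟩) h

lemma mulVec_self_eq_zero {U : Matrix n a ℂ} {x : a → ℂ} (h : (Uᴴ * U) *ᵥ x = 0) :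
    U *ᵥ x = 0 := by
  have h0 : star x ⬝ᵥ (Uᴴ * U) *ᵥ x = 0 := by rw [h, dotProduct_zero]
  rwa [← mulVec_mulVec, dotProduct_mulVec, vecMul_conjTranspose, star_star,
    dotProduct_star_self_eq_zero] at h0

lemma gram_fromCols (U : Matrix n a ℂ) (V : Matrix n b ℂ) :
    (fromCols U V)ᴴ * fromCols U V =
      fromBlocks (Uᴴ * U) (Uᴴ * V) (Vᴴ * U) (Vᴴ * V) := by
  rw [conjTranspose_fromCols_eq_fromRows_conjTranspose, fromRows_mul_fromCols]

lemma fischer [DecidableEq a] [DecidableEq b] (U : Matrix n a ℂ) (V : Matrix n b ℂ) :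
    ((fromCols U V)ᴴ * fromCols U V).det ≤ (Uᴴ * U).det * (Vᴴ * V).det := by
  by_cases h : (Uᴴ * U).det = 0
  · obtain ⟨x, hx, hUx⟩ := Matrix.exists_mulVec_eq_zero_iff.mpr h
    have hU : U *ᵥ x = 0 := mulVec_self_eq_zero hUx
    have hw : ((fromCols U V)ᴴ * fromCols U V) *ᵥ Sum.elim x 0 = 0 := by
      rw [gram_fromCols, fromBlocks_mulVec]
      simp [hUx, ← mulVec_mulVec, hU]
    have hwne : Sum.elim x (0 : b → ℂ) ≠ 0 := by
      intro hc
      exact hx (funext fun i => congrFun hc (Sum.inl i))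
    have h0 : ((fromCols U V)ᴴ * fromCols U V).det = 0 :=
      Matrix.exists_mulVec_eq_zero_iff.mp ⟨_, hwne, hw⟩
    rw [h0]
    exact mul_nonneg (det_nonneg (posSemidef_conjTranspose_mul_self U))
      (det_nonneg (posSemidef_conjTranspose_mul_self V))
  · have hA : (Uᴴ * U).PosDef := posDef_of_det_ne_zero (posSemidef_conjTranspose_mul_self U) h
    have : Invertible (Uᴴ * U) := Matrix.invertibleOfIsUnitDet _ (Ne.isUnit h)
    rw [gram_fromCols, det_fromBlocks₁₁]
    have hinv : ⅟(Uᴴ * U) = (Uᴴ * U)⁻¹ := Matrix.invOf_eq_nonsing_inv _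
    have hXpsd : (Vᴴ * U * ⅟(Uᴴ * U) * (Uᴴ * V)).PosSemidef := by
      have h1 : (Uᴴ * U)⁻¹.PosSemidef := hA.posSemidef.inv
      have h2 := h1.conjTranspose_mul_mul_same (Uᴴ * V)
      rwa [conjTranspose_mul, conjTranspose_conjTranspose, ← hinv] at h2
    have hSchur : (Vᴴ * V - Vᴴ * U * ⅟(Uᴴ * U) * (Uᴴ * V)).PosSemidef := by
      have hblocks : (fromBlocks (Uᴴ * U) (Uᴴ * V) ((Uᴴ * V)ᴴ) (Vᴴ * V)).PosSemidef := by
        rw [conjTranspose_mul, conjTranspose_conjTranspose, ← gram_fromCols]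
        exact posSemidef_conjTranspose_mul_self _
      have h3 := (PosDef.fromBlocks₁₁ (Uᴴ * V) (Vᴴ * V) hA).mp hblocks
      rwa [conjTranspose_mul, conjTranspose_conjTranspose, ← hinv] at h3
    have hdle : (Vᴴ * V - Vᴴ * U * ⅟(Uᴴ * U) * (Uᴴ * V)).det ≤ (Vᴴ * V).det := by
      apply det_le_det hSchur
      simpa using hXpsd
    exact mul_le_mul_of_nonneg_left hdle (det_nonneg hA.posSemidef)

end KotAux

namespace KotAux

variable {n a b c : Type*} [Fintype n] [Fintype a] [Fintype b] [Fintype c]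
  [DecidableEq a] [DecidableEq b] [DecidableEq c]

lemma key_lemma {n a d : Type*} [Fintype n] [Fintype a] [DecidableEq a] [DecidableEq n]
    (X : Matrix n a ℂ) [Invertible (Xᴴ * X)] (Y' : Matrix n d ℂ) :
    Y'ᴴ * Y' - Y'ᴴ * X * ⅟(Xᴴ * X) * (Xᴴ * Y')
      = ((1 - X * ((Xᴴ * X)⁻¹ * Xᴴ)) * Y')ᴴ * ((1 - X * ((Xᴴ * X)⁻¹ * Xᴴ)) * Y') := by
  have hinv : ⅟(Xᴴ * X) = (Xᴴ * X)⁻¹ := Matrix.invOf_eq_nonsing_inv _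
  have hAh : (Xᴴ * X).IsHermitian := (posSemidef_conjTranspose_mul_self X).isHermitian
  have hAinvh : ((Xᴴ * X)⁻¹)ᴴ = (Xᴴ * X)⁻¹ := by
    rw [Matrix.conjTranspose_nonsing_inv, hAh.eq]
  have hAA : (Xᴴ * X) * (Xᴴ * X)⁻¹ = 1 := Matrix.mul_inv_of_invertible _
  have hcollapse : ∀ (M : Matrix a d ℂ), Xᴴ * (X * ((Xᴴ * X)⁻¹ * M)) = M := by
    intro M
    simp only [← Matrix.mul_assoc]
    rw [hAA, Matrix.one_mul]
  simp only [hinv, Matrix.sub_mul, Matrix.mul_sub, Matrix.conjTranspose_sub,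
    Matrix.conjTranspose_mul, Matrix.conjTranspose_one, hAinvh,
    Matrix.conjTranspose_conjTranspose, Matrix.one_mul, Matrix.mul_one,
    Matrix.mul_assoc, hcollapse]
  abel

set_option maxHeartbeats 1000000 in
lemma kot_col [DecidableEq n] (X : Matrix n a ℂ) (Y : Matrix n b ℂ) (Z : Matrix n c ℂ) :
    ((fromCols X (fromCols Y Z))ᴴ * fromCols X (fromCols Y Z)).det * (Xᴴ * X).det ≤
      ((fromCols X Y)ᴴ * fromCols X Y).det *
        ((fromCols X Z)ᴴ * fromCols X Z).det := by
  by_cases h : (Xᴴ * X).det = 0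
  · rw [h, mul_zero]
    exact mul_nonneg (det_nonneg (posSemidef_conjTranspose_mul_self _))
      (det_nonneg (posSemidef_conjTranspose_mul_self _))
  · have hApsd : (Xᴴ * X).PosSemidef := posSemidef_conjTranspose_mul_self X
    have : Invertible (Xᴴ * X) := Matrix.invertibleOfIsUnitDet _ (Ne.isUnit h)
    have dBig : ((fromCols X (fromCols Y Z))ᴴ * fromCols X (fromCols Y Z)).det
        = (Xᴴ * X).det * (((1 - X * ((Xᴴ * X)⁻¹ * Xᴴ)) * fromCols Y Z)ᴴ * ((1 - X * ((Xᴴ * X)⁻¹ * Xᴴ)) * fromCols Y Z)).det := by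
      rw [gram_fromCols, det_fromBlocks₁₁, key_lemma]
    have dXY : ((fromCols X Y)ᴴ * fromCols X Y).det
        = (Xᴴ * X).det * (((1 - X * ((Xᴴ * X)⁻¹ * Xᴴ)) * Y)ᴴ * ((1 - X * ((Xᴴ * X)⁻¹ * Xᴴ)) * Y)).det := by
      rw [gram_fromCols, det_fromBlocks₁₁, key_lemma]
    have dXZ : ((fromCols X Z)ᴴ * fromCols X Z).det
        = (Xᴴ * X).det * (((1 - X * ((Xᴴ * X)⁻¹ * Xᴴ)) * Z)ᴴ * ((1 - X * ((Xᴴ * X)⁻¹ * Xᴴ)) * Z)).det := by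
      rw [gram_fromCols, det_fromBlocks₁₁, key_lemma]
    have hPW : (1 - X * ((Xᴴ * X)⁻¹ * Xᴴ)) * fromCols Y Z = fromCols ((1 - X * ((Xᴴ * X)⁻¹ * Xᴴ)) * Y) ((1 - X * ((Xᴴ * X)⁻¹ * Xᴴ)) * Z) :=
      mul_fromCols _ _ _
    have hfis : (((1 - X * ((Xᴴ * X)⁻¹ * Xᴴ)) * fromCols Y Z)ᴴ * ((1 - X * ((Xᴴ * X)⁻¹ * Xᴴ)) * fromCols Y Z)).det
        ≤ (((1 - X * ((Xᴴ * X)⁻¹ * Xᴴ)) * Y)ᴴ * ((1 - X * ((Xᴴ * X)⁻¹ * Xᴴ)) * Y)).det * (((1 - X * ((Xᴴ * X)⁻¹ * Xᴴ)) * Z)ᴴ * ((1 - X * ((Xᴴ * X)⁻¹ * Xᴴ)) * Z)).det := by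
      rw [hPW]; exact fischer _ _
    have hAd : (0:ℂ) ≤ (Xᴴ * X).det := det_nonneg hApsd
    rw [dBig, dXY, dXZ]
    have key := mul_le_mul_of_nonneg_left hfis (mul_nonneg hAd hAd)
    convert key using 1 <;> ring

end KotAux


namespace KotAux

variable {H : Type*} [NormedAddCommGroup H] [InnerProductSpace ℂ H] [FiniteDimensional ℂ H]

noncomputable def mat {ι : Type*} [Fintype ι] [DecidableEq ι]
    (A : EuclideanSpace ℂ ι →ₗ[ℂ] H) :
    Matrix (Fin (Module.finrank ℂ H)) ι ℂ :=
  LinearMap.toMatrix (EuclideanSpace.basisFun ι ℂ).toBasis (stdOrthonormalBasis ℂ H).toBasis A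

lemma gramDet_eq {ι : Type*} [Fintype ι] [DecidableEq ι]
    (A : EuclideanSpace ℂ ι →ₗ[ℂ] H) :
    gramDet A = ((mat A)ᴴ * mat A).det := by
  unfold gramDet
  rw [← LinearMap.det_toMatrix (EuclideanSpace.basisFun ι ℂ).toBasis,
    LinearMap.toMatrix_comp _ (stdOrthonormalBasis ℂ H).toBasis,
    LinearMap.toMatrix_adjoint]
  rfl

lemma combinedMap_apply {ι κ : Type*}
    (A : EuclideanSpace ℂ ι →ₗ[ℂ] H) (B : EuclideanSpace ℂ κ →ₗ[ℂ] H)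
    (v : EuclideanSpace ℂ (ι ⊕ κ)) :
    combinedMap A B v = A (WithLp.toLp 2 (WithLp.ofLp v ∘ Sum.inl)) +
      B (WithLp.toLp 2 (WithLp.ofLp v ∘ Sum.inr)) := rfl

lemma mat_combined {ι κ : Type*} [Fintype ι] [Fintype κ] [DecidableEq ι] [DecidableEq κ]
    (A : EuclideanSpace ℂ ι →ₗ[ℂ] H) (B : EuclideanSpace ℂ κ →ₗ[ℂ] H) :
    mat (combinedMap A B) = fromCols (mat A) (mat B) := by
  have e1 : ∀ i : ι, (WithLp.toLp 2 (WithLp.ofLp (EuclideanSpace.single (Sum.inl i) (1:ℂ) : EuclideanSpace ℂ (ι ⊕ κ))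
      ∘ (Sum.inl : ι → ι ⊕ κ)) : EuclideanSpace ℂ ι) = EuclideanSpace.single i 1 := by
    intro i; ext j; simp [EuclideanSpace.single_apply, Pi.single_apply]
  have e2 : ∀ i : ι, (WithLp.toLp 2 (WithLp.ofLp (EuclideanSpace.single (Sum.inl i) (1:ℂ) : EuclideanSpace ℂ (ι ⊕ κ))
      ∘ (Sum.inr : κ → ι ⊕ κ)) : EuclideanSpace ℂ κ) = 0 := by
    intro i; ext j; simp [EuclideanSpace.single_apply]
  have e3 : ∀ i : κ, (WithLp.toLp 2 (WithLp.ofLp (EuclideanSpace.single (Sum.inr i) (1:ℂ) : EuclideanSpace ℂ (ι ⊕ κ))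
      ∘ (Sum.inr : κ → ι ⊕ κ)) : EuclideanSpace ℂ κ) = EuclideanSpace.single i 1 := by
    intro i; ext j; simp [EuclideanSpace.single_apply, Pi.single_apply]
  have e4 : ∀ i : κ, (WithLp.toLp 2 (WithLp.ofLp (EuclideanSpace.single (Sum.inr i) (1:ℂ) : EuclideanSpace ℂ (ι ⊕ κ))
      ∘ (Sum.inl : ι → ι ⊕ κ)) : EuclideanSpace ℂ ι) = 0 := by
    intro i; ext j; simp [EuclideanSpace.single_apply]
  ext r i
  cases i with
  | inl i =>
    simp only [mat, LinearMap.toMatrix_apply, fromCols_apply_inl,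
      OrthonormalBasis.coe_toBasis, EuclideanSpace.basisFun_apply, combinedMap_apply]
    rw [e1, e2]
    simp
  | inr i =>
    simp only [mat, LinearMap.toMatrix_apply, fromCols_apply_inr,
      OrthonormalBasis.coe_toBasis, EuclideanSpace.basisFun_apply, combinedMap_apply]
    rw [e3, e4]
    simp

end KotAux


/-- Strong subadditivity (Koteljanskiĭ / Hadamard–Fischer) for Gram determinants:
`G([R,S,T]) · G(R) ≤ G([R,S]) · G([R,T])`. -/
theorem stmt_3 {j k ℓ : ℕ} {H : Type*}
    [NormedAddCommGroup H] [InnerProductSpace ℂ H] [FiniteDimensional ℂ H]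
    (R : EuclideanSpace ℂ (Fin j) →ₗ[ℂ] H) (S : EuclideanSpace ℂ (Fin k) →ₗ[ℂ] H)
    (T : EuclideanSpace ℂ (Fin ℓ) →ₗ[ℂ] H) :
    gramDet (combinedMap R (combinedMap S T)) * gramDet R ≤
      gramDet (combinedMap R S) * gramDet (combinedMap R T) := by
  rw [KotAux.gramDet_eq, KotAux.gramDet_eq, KotAux.gramDet_eq, KotAux.gramDet_eq,
    KotAux.mat_combined, KotAux.mat_combined, KotAux.mat_combined, KotAux.mat_combined]
  exact KotAux.kot_col _ _ _
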